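/- With the setup of the invariance lemma, if f : G → ℝ is supported in the finite connected set A ∋ e and satisfies P_A f = λ f, then σ = ν_{A,dA} * f satisfies σ * μ̃ = λ σ in the group algebra of H ≀ G. Consequently, if σ ≠ 0, the right convolution operator by μ̃ on ℓ²(H ≀ G) has λ as an eigenvalue with a finitely supported eigenfunction. -/

import Mathlib

open Function MonoidAlgebra
open scoped Classical
set_option linter.unusedSectionVars false

noncomputable section

variable (G H : Type) [Group G] [Group H] [Fintype H]

/-- The automorphism `L_g` of the full group of configurations `G → H`,
`(L_g η)(x) = η (g⁻¹ x)`. -/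
def lampAut (g : G) : (G → H) ≃* (G → H) where
  toFun η := fun x => η (g⁻¹ * x)
  invFun η := fun x => η (g * x)
  left_inv η := by funext x; simp [← mul_assoc]
  right_inv η := by funext x; simp [← mul_assoc]
  map_mul' η η' := rfl

/-- The action homomorphism `G →* MulAut (G → H)`. -/
def lampHom : G →* MulAut (G → H) where
  toFun := lampAut G H
  map_one' := by ext η x; simp [lampAut]
  map_mul' g₁ g₂ := by ext η x; simp [lampAut, MulAut.mul_apply, mul_assoc]

/-- The unrestricted wreath product `(H^G) ⋊ G`. -/
abbrev WrFull := (G → H) ⋊[lampHom G H] G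

/-- The (restricted) wreath product `H ≀ G = (⊕_G H) ⋊ G`, realized as the
subgroup of the unrestricted wreath product consisting of the elements whose
configuration has finite support. -/
def Wreath : Subgroup (WrFull G H) where
  carrier := {w | (mulSupport w.left).Finite}
  one_mem' := by
    simp only [Set.mem_setOf_eq, SemidirectProduct.one_left]
    simp [mulSupport]
  mul_mem' := by
    intro a b ha hb
    simp only [Set.mem_setOf_eq, SemidirectProduct.mul_left] at *
    refine (ha.union ?_).subset (mulSupport_mul _ _)
    have : mulSupport (lampHom G H a.right b.left) =
        (fun x => (a.right)⁻¹ * x) ⁻¹' mulSupport b.left := by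
      ext x
      simp [lampHom, lampAut, mulSupport]
    rw [this]
    exact hb.preimage (by
      intro x _ y _ h
      simpa using mul_left_cancel h)
  inv_mem' := by
    intro a ha
    simp only [Set.mem_setOf_eq, SemidirectProduct.inv_left] at *
    have : mulSupport (lampHom G H (a.right)⁻¹ (a.left)⁻¹) =
        (fun x => a.right * x) ⁻¹' mulSupport a.left := by
      ext x
      simp [lampHom, lampAut, mulSupport]
    rw [this]
    exact ha.preimage (by
      intro x _ y _ h
      simpa using mul_left_cancel h)

/-- The configuration which has state `h` at the point `g` and is trivial
elsewhere. -/
def pointConf (g : G) (h : H) : G → H := fun x => if x = g then h else 1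

lemma pointConf_finite (g : G) (h : H) : (mulSupport (pointConf G H g h)).Finite := by
  apply (Set.finite_singleton g).subset
  intro x hx
  by_contra hxg
  simp only [Set.mem_singleton_iff] at hxg
  simp [mulSupport, pointConf, hxg] at hx

/-- A finitely supported configuration together with a position, as an
element of the wreath product. -/
def wr (η : G → H) (hη : (mulSupport η).Finite) (g : G) : Wreath G H :=
  ⟨⟨η, g⟩, hη⟩

/-- The embedding of the base group `G` in the wreath product, `g ↦ (1, g)`. -/
def embG (g : G) : Wreath G H :=
  wr G H 1 (by simp [mulSupport]) g

/-- The embedding of the lamp group `H` in the wreath product,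
`h ↦ (η_e^h, e)`. -/
def embH (h : H) : Wreath G H :=
  wr G H (pointConf G H 1 h) (pointConf_finite G H 1 h) 1

/-- The point mass `δ_g` at the embedded element `g ∈ G`, as an element of the
group algebra of the wreath product. -/
def deltaG (g : G) : MonoidAlgebra ℝ (Wreath G H) :=
  MonoidAlgebra.single (embG G H g) 1

/-- The uniform probability measure `ν` on the embedded copy of `H` inside the
wreath product. -/
def nu : MonoidAlgebra ℝ (Wreath G H) :=
  ∑ h : H, MonoidAlgebra.single (embH G H h) ((Fintype.card H : ℝ)⁻¹)

/-- The translated uniform measure `ν_g = δ_g * ν * δ_{g⁻¹}`. -/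
def nuAt (g : G) : MonoidAlgebra ℝ (Wreath G H) :=
  deltaG G H g * nu G H * deltaG G H g⁻¹

/-- The complementary projection `ν̄_g = δ_{(1,e)} - ν_g`. -/
def nuBarAt (g : G) : MonoidAlgebra ℝ (Wreath G H) :=
  1 - nuAt G H g

end

/-- The Cayley graph of `G` with respect to `S` (for symmetric `S` the second
condition in the adjacency is redundant). -/
def cayley (G : Type) [Group G] (S : Finset G) : SimpleGraph G where
  Adj x y := x ≠ y ∧ x⁻¹ * y ∈ S ∧ y⁻¹ * x ∈ S
  symm := ⟨by
    intro x y h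
    exact ⟨h.1.symm, h.2.2, h.2.1⟩⟩
  loopless := ⟨fun x h => h.1 rfl⟩

/-- The outer vertex boundary of the finite set `A` in the Cayley graph of `G`
with respect to the (symmetric) set `S`: all vertices outside `A` with a
neighbour in `A`. -/
noncomputable def cayleyBoundary (G : Type) [Group G] (S A : Finset G) : Finset G :=
  (A.biUnion fun x => S.image fun s => x * s).filter (· ∉ A)

noncomputable section Aux
open Function MonoidAlgebra
variable (G H : Type) [Group G] [Group H] [Fintype H]

lemma embG_one : embG G H 1 = 1 := rfl

lemma embG_mul (g₁ g₂ : G) : embG G H (g₁ * g₂) = embG G H g₁ * embG G H g₂ := by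
  apply Subtype.ext
  apply SemidirectProduct.ext
  · show (1 : G → H) = 1 * lampHom G H g₁ 1
    simp
  · rfl

lemma deltaG_mul (g₁ g₂ : G) :
    deltaG G H g₁ * deltaG G H g₂ = deltaG G H (g₁ * g₂) := by
  simp [deltaG, MonoidAlgebra.single_mul_single, embG_mul]

lemma deltaG_one : deltaG G H 1 = 1 := rfl

lemma embH_mul (h₁ h₂ : H) : embH G H (h₁ * h₂) = embH G H h₁ * embH G H h₂ := by
  apply Subtype.ext
  apply SemidirectProduct.ext
  · show pointConf G H 1 (h₁ * h₂) =
      pointConf G H 1 h₁ * lampHom G H 1 (pointConf G H 1 h₂)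
    funext x
    simp [pointConf, lampHom, lampAut, Pi.mul_apply]
    split <;> simp
  · show (1 : G) = 1 * 1
    simp

lemma nu_mul_nu : nu G H * nu G H = nu G H := by
  classical
  unfold nu
  rw [Finset.sum_mul]
  have key : ∀ h : H, (MonoidAlgebra.single (embH G H h) ((Fintype.card H : ℝ)⁻¹) *
      ∑ h' : H, MonoidAlgebra.single (embH G H h') ((Fintype.card H : ℝ)⁻¹)) =
      ∑ k : H, MonoidAlgebra.single (embH G H k)
        ((Fintype.card H : ℝ)⁻¹ * (Fintype.card H : ℝ)⁻¹) := by
    intro h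
    rw [Finset.mul_sum]
    refine Fintype.sum_equiv (Equiv.mulLeft h) _ _ (fun h' => ?_)
    rw [MonoidAlgebra.single_mul_single, ← embH_mul]
    rfl
  rw [Finset.sum_congr rfl fun h _ => key h, Finset.sum_const, Finset.card_univ, ← Nat.cast_smul_eq_nsmul ℝ, Finset.smul_sum]
  refine Finset.sum_congr rfl fun k _ => ?_
  rw [MonoidAlgebra.smul_single, smul_eq_mul]
  congr 1
  have hc : (Fintype.card H : ℝ) ≠ 0 := Nat.cast_ne_zero.2 Fintype.card_ne_zero
  field_simp

lemma conj_embH (a : G) (h : H) :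
    embG G H a * embH G H h * embG G H a⁻¹ =
      wr G H (pointConf G H a h) (pointConf_finite G H a h) 1 := by
  apply Subtype.ext
  apply SemidirectProduct.ext
  · show (1 : G → H) * lampHom G H a (pointConf G H 1 h) *
      lampHom G H (a * 1) 1 = pointConf G H a h
    funext x
    simp only [lampHom, lampAut, pointConf, Pi.mul_apply, Pi.one_apply,
      MonoidHom.coe_mk, OneHom.coe_mk, MulEquiv.coe_mk, Equiv.coe_fn_mk,
      MulAut.mul_apply, one_mul, mul_one]
    rcases eq_or_ne x a with rfl | hx
    · simp
    · rw [if_neg hx, if_neg (fun hh : a⁻¹ * x = 1 =>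
        hx ((inv_mul_eq_one.mp hh).symm))]
  · show a * 1 * a⁻¹ = 1
    group

lemma wr_comm (a b : G) (hab : a ≠ b) (h h' : H) :
    wr G H (pointConf G H a h) (pointConf_finite G H a h) 1 *
      wr G H (pointConf G H b h') (pointConf_finite G H b h') 1 =
    wr G H (pointConf G H b h') (pointConf_finite G H b h') 1 *
      wr G H (pointConf G H a h) (pointConf_finite G H a h) 1 := by
  apply Subtype.ext
  apply SemidirectProduct.ext
  · show pointConf G H a h * lampHom G H 1 (pointConf G H b h') =
      pointConf G H b h' * lampHom G H 1 (pointConf G H a h)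
    funext x
    have l1 : lampHom G H (1 : G) = 1 := map_one _
    rw [l1]
    simp only [MulAut.one_apply, Pi.mul_apply]
    rcases eq_or_ne x a with rfl | hxa
    · simp [pointConf, hab]
    · simp [pointConf, hxa]
  · rfl

lemma nuAt_eq (a : G) : nuAt G H a =
    ∑ h : H, MonoidAlgebra.single
      (wr G H (pointConf G H a h) (pointConf_finite G H a h) 1)
      ((Fintype.card H : ℝ)⁻¹) := by
  unfold nuAt nu
  rw [Finset.mul_sum, Finset.sum_mul]
  refine Finset.sum_congr rfl fun h _ => ?_
  unfold deltaG
  rw [MonoidAlgebra.single_mul_single, MonoidAlgebra.single_mul_single,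
    one_mul, mul_one, conj_embH]

lemma commute_nuAt (a b : G) : Commute (nuAt G H a) (nuAt G H b) := by
  rcases eq_or_ne a b with rfl | hab
  · exact Commute.refl _
  · rw [nuAt_eq, nuAt_eq]
    refine Commute.sum_right _ _ _ fun h _ => Commute.sum_left _ _ _ fun h' _ => ?_
    unfold Commute SemiconjBy
    rw [MonoidAlgebra.single_mul_single, MonoidAlgebra.single_mul_single,
      wr_comm G H a b hab]

lemma nuAt_mul_self (a : G) : nuAt G H a * nuAt G H a = nuAt G H a := by
  unfold nuAt
  have h1 : deltaG G H a⁻¹ * deltaG G H a = 1 := by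
    rw [deltaG_mul, inv_mul_cancel, deltaG_one]
  calc deltaG G H a * nu G H * deltaG G H a⁻¹ * (deltaG G H a * nu G H * deltaG G H a⁻¹)
      = deltaG G H a * (nu G H * ((deltaG G H a⁻¹ * deltaG G H a) * nu G H)) * deltaG G H a⁻¹ := by
        simp only [mul_assoc]
    _ = deltaG G H a * nu G H * deltaG G H a⁻¹ := by rw [h1, one_mul, nu_mul_nu]

lemma commute_nuAt_nuBarAt (a b : G) : Commute (nuAt G H a) (nuBarAt G H b) := by
  unfold nuBarAt
  exact (Commute.one_right _).sub_right (commute_nuAt G H a b)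

lemma nuBarAt_mul_nuAt (a : G) : nuBarAt G H a * nuAt G H a = 0 := by
  unfold nuBarAt
  rw [sub_mul, one_mul, nuAt_mul_self, sub_self]

lemma deltaG_mul_nu (g : G) : deltaG G H g * nu G H = nuAt G H g * deltaG G H g := by
  unfold nuAt
  rw [mul_assoc, deltaG_mul, inv_mul_cancel, deltaG_one, mul_one]

lemma single_fsum (G : Type) [Group G] (A : Finset G) (g : G → ℝ) (x : G) :
    MonoidAlgebra.single x (∑ y ∈ A, g y) = ∑ y ∈ A, MonoidAlgebra.single x (g y) := by
  rw [← MonoidAlgebra.ofCoeff_single, Finsupp.single_finset_sum, MonoidAlgebra.ofCoeff_sum]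
  rfl

lemma mapDomain_fsum' {α β ι : Type} (e : α → β) (t : Finset ι) (g : ι → MonoidAlgebra ℝ α) :
    MonoidAlgebra.mapDomain e (∑ i ∈ t, g i) = ∑ i ∈ t, MonoidAlgebra.mapDomain e (g i) := by
  unfold MonoidAlgebra.mapDomain
  rw [MonoidAlgebra.coeff_sum, Finsupp.mapDomain_finset_sum, MonoidAlgebra.ofCoeff_sum]

lemma mapDomain_smul' {α β : Type} (e : α → β) (c : ℝ) (x : MonoidAlgebra ℝ α) :
    MonoidAlgebra.mapDomain e (c • x) = c • MonoidAlgebra.mapDomain e x := by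
  unfold MonoidAlgebra.mapDomain
  rw [MonoidAlgebra.coeff_smul, Finsupp.mapDomain_smul, MonoidAlgebra.ofCoeff_smul]

lemma convolution_identity (G : Type) [Group G] (μ f : MonoidAlgebra ℝ G)
    (hμsym : ∀ g : G, μ.coeff g⁻¹ = μ.coeff g) (A : Finset G)
    (hf : f.coeff.support ⊆ A) :
    ∑ g ∈ f.coeff.support, ∑ s ∈ μ.coeff.support,
        (if g * s ∈ A then (f.coeff g * μ.coeff s) • MonoidAlgebra.single (g * s) (1 : ℝ)
          else 0)
      = ∑ x ∈ A, MonoidAlgebra.single x (∑ y ∈ A, μ.coeff (x⁻¹ * y) * f.coeff y) := by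
  classical
  have hrhs : ∑ x ∈ A, MonoidAlgebra.single x (∑ y ∈ A, μ.coeff (x⁻¹ * y) * f.coeff y)
      = ∑ y ∈ f.coeff.support, ∑ x ∈ A, MonoidAlgebra.single x (μ.coeff (x⁻¹ * y) * f.coeff y) := by
    rw [Finset.sum_congr rfl fun x _ => single_fsum G A _ x,
      Finset.sum_comm]
    refine (Finset.sum_subset hf fun y _ hy => ?_).symm
    have : f.coeff y = 0 := Finsupp.notMem_support_iff.mp hy
    simp [this]
  rw [hrhs]
  refine Finset.sum_congr rfl fun y hy => ?_
  -- fix y; compare the two inner sums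
  set F : G → MonoidAlgebra ℝ G :=
    fun x => if x ∈ A then (f.coeff y * μ.coeff (y⁻¹ * x)) • MonoidAlgebra.single x (1 : ℝ)
      else 0 with hF
  have h1 : ∑ s ∈ μ.coeff.support,
      (if y * s ∈ A then (f.coeff y * μ.coeff s) • MonoidAlgebra.single (y * s) (1 : ℝ) else 0)
      = ∑ s ∈ μ.coeff.support, F (y * s) := by
    refine Finset.sum_congr rfl fun s _ => ?_
    simp [hF, inv_mul_cancel_left]
  have h2 : ∑ s ∈ μ.coeff.support, F (y * s) = ∑ x ∈ μ.coeff.support.map (mulLeftEmbedding y), F x := by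
    rw [Finset.sum_map]
    rfl
  have hsub1 : μ.coeff.support.map (mulLeftEmbedding y) ⊆
      μ.coeff.support.map (mulLeftEmbedding y) ∪ A := Finset.subset_union_left
  have hsub2 : A ⊆ μ.coeff.support.map (mulLeftEmbedding y) ∪ A := Finset.subset_union_right
  have h3 : ∑ x ∈ μ.coeff.support.map (mulLeftEmbedding y), F x
      = ∑ x ∈ μ.coeff.support.map (mulLeftEmbedding y) ∪ A, F x := by
    refine Finset.sum_subset hsub1 fun x _ hx => ?_
    by_cases hxA : x ∈ A
    · have hμ0 : μ.coeff (y⁻¹ * x) = 0 := by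
        by_contra hne
        exact hx (Finset.mem_map.mpr ⟨y⁻¹ * x, Finsupp.mem_support_iff.mpr hne,
          by simp [mulLeftEmbedding]⟩)
      simp [hF, hxA, hμ0]
    · simp [hF, hxA]
  have h4 : ∑ x ∈ A, F x = ∑ x ∈ μ.coeff.support.map (mulLeftEmbedding y) ∪ A, F x := by
    refine Finset.sum_subset hsub2 fun x _ hx => ?_
    simp [hF, hx]
  have h5 : ∑ x ∈ A, F x = ∑ x ∈ A, MonoidAlgebra.single x (μ.coeff (x⁻¹ * y) * f.coeff y) := by
    refine Finset.sum_congr rfl fun x hx => ?_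
    have hs : μ.coeff (y⁻¹ * x) = μ.coeff (x⁻¹ * y) := by
      rw [← hμsym (y⁻¹ * x)]; congr 1; group
    rw [hF]
    simp only [if_pos hx, hs, mul_comm (f.coeff y)]
    rw [MonoidAlgebra.smul_single, smul_eq_mul, mul_one]
  rw [h1, h2, h3, ← h4, h5]

end Aux

/-- In the setting of the invariance lemma, if `f` is
supported in the finite connected set `A ∋ e` and `P_A f = λ f`, then
`σ = ν_{A,dA} * f` satisfies `σ * μ̃ = λ σ`; consequently, if `σ ≠ 0`, then
`λ` is an eigenvalue of right convolution by `μ̃` on `ℓ²(H ≀ G)` with a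
finitely supported eigenfunction. -/
theorem eigenfunction_lemma (G H : Type) [Group G] [Group H] [Fintype H]
    (S : Finset G) (hS : ∀ s ∈ S, s⁻¹ ∈ S)
    (μ : MonoidAlgebra ℝ G) (hμpos : ∀ g : G, 0 ≤ μ.coeff g)
    (hμsupp : ↑μ.coeff.support ⊆ (S : Set G)) (hμsym : ∀ g : G, μ.coeff g⁻¹ = μ.coeff g)
    (hμprob : ∑ g ∈ μ.coeff.support, μ.coeff g = 1)
    (A : Finset G) (h1A : (1 : G) ∈ A)
    (hAconn : ((cayley G S).induce (A : Set G)).Connected)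
    (hcA : (A : Set G).Pairwise fun a b => Commute (nuAt G H a) (nuAt G H b))
    (hcdA : ((cayleyBoundary G S A : Finset G) : Set G).Pairwise
      fun a b => Commute (nuBarAt G H a) (nuBarAt G H b))
    (f : MonoidAlgebra ℝ G) (hf : ↑f.coeff.support ⊆ (A : Set G))
    (lam : ℝ)
    (heig : ∑ x ∈ A, MonoidAlgebra.single x (∑ y ∈ A, μ.coeff (x⁻¹ * y) * f.coeff y)
      = lam • f) :
    ((A.noncommProd (nuAt G H) hcA *
        (cayleyBoundary G S A).noncommProd (nuBarAt G H) hcdA) *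
      (show MonoidAlgebra ℝ (Wreath G H) from MonoidAlgebra.ofCoeff (Finsupp.mapDomain (embG G H) f.coeff))) *
      (nu G H * (show MonoidAlgebra ℝ (Wreath G H) from
          MonoidAlgebra.ofCoeff (Finsupp.mapDomain (embG G H) μ.coeff)) * nu G H)
    = lam • ((A.noncommProd (nuAt G H) hcA *
        (cayleyBoundary G S A).noncommProd (nuBarAt G H) hcdA) *
      (show MonoidAlgebra ℝ (Wreath G H) from MonoidAlgebra.ofCoeff (Finsupp.mapDomain (embG G H) f.coeff)))
    ∧ (((A.noncommProd (nuAt G H) hcA *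
          (cayleyBoundary G S A).noncommProd (nuBarAt G H) hcdA) *
        (show MonoidAlgebra ℝ (Wreath G H) from MonoidAlgebra.ofCoeff (Finsupp.mapDomain (embG G H) f.coeff)))
          ≠ 0 →
      ∃ F : MonoidAlgebra ℝ (Wreath G H), F ≠ 0 ∧
        F * (nu G H * (show MonoidAlgebra ℝ (Wreath G H) from
            MonoidAlgebra.ofCoeff (Finsupp.mapDomain (embG G H) μ.coeff)) * nu G H) = lam • F) := by
  classical
  have hfsub : f.coeff.support ⊆ A := Finset.coe_subset.mp hf
  set P := A.noncommProd (nuAt G H) hcA with hPdef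
  set Q := (cayleyBoundary G S A).noncommProd (nuBarAt G H) hcdA with hQdef
  have hPnu : ∀ g ∈ A, P * nuAt G H g = P := by
    intro g hg
    rw [hPdef, ← Finset.noncommProd_erase_mul A hg (nuAt G H) hcA, mul_assoc,
      nuAt_mul_self]
  have hQcomm : ∀ g : G, Commute (nuAt G H g) Q :=
    fun g => Finset.noncommProd_commute _ _ _ _
      (fun b _ => commute_nuAt_nuBarAt G H g b)
  have hQnu0 : ∀ b ∈ cayleyBoundary G S A, Q * nuAt G H b = 0 := by
    intro b hb
    rw [hQdef, ← Finset.noncommProd_erase_mul _ hb (nuBarAt G H) hcdA, mul_assoc,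
      nuBarAt_mul_nuAt, mul_zero]
  have hRnu : ∀ g ∈ A, P * Q * nuAt G H g = P * Q := by
    intro g hg
    rw [mul_assoc, ← (hQcomm g).eq, ← mul_assoc, hPnu g hg]
  have hRnu0 : ∀ b ∈ cayleyBoundary G S A, P * Q * nuAt G H b = 0 := by
    intro b hb
    rw [mul_assoc, hQnu0 b hb, mul_zero]
  have hbd : ∀ g ∈ A, ∀ s ∈ μ.coeff.support, g * s ∉ A →
      g * s ∈ cayleyBoundary G S A := by
    intro g hg s hs hgs
    unfold cayleyBoundary
    exact Finset.mem_filter.mpr ⟨Finset.mem_biUnion.mpr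
      ⟨g, hg, Finset.mem_image.mpr ⟨s, hμsupp hs, rfl⟩⟩, hgs⟩
  have hfexp : (show MonoidAlgebra ℝ (Wreath G H) from MonoidAlgebra.ofCoeff (Finsupp.mapDomain (embG G H) f.coeff))
      = ∑ g ∈ f.coeff.support, MonoidAlgebra.single (embG G H g) (f.coeff g) := by
      rw [Finsupp.mapDomain, Finsupp.sum, MonoidAlgebra.ofCoeff_sum]; rfl
  have hμexp : (show MonoidAlgebra ℝ (Wreath G H) from MonoidAlgebra.ofCoeff (Finsupp.mapDomain (embG G H) μ.coeff))
      = ∑ s ∈ μ.coeff.support, MonoidAlgebra.single (embG G H s) (μ.coeff s) := by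
      rw [Finsupp.mapDomain, Finsupp.sum, MonoidAlgebra.ofCoeff_sum]; rfl
  have hterm : ∀ g s : G,
      MonoidAlgebra.single (embG G H g) (f.coeff g) *
        (nu G H * MonoidAlgebra.single (embG G H s) (μ.coeff s) * nu G H)
      = (f.coeff g * μ.coeff s) • (nuAt G H g * nuAt G H (g * s) * deltaG G H (g * s)) := by
    intro g s
    have e1 : MonoidAlgebra.single (embG G H g) (f.coeff g) = f.coeff g • deltaG G H g := by
      rw [deltaG, MonoidAlgebra.smul_single, smul_eq_mul, mul_one]
    have e2 : MonoidAlgebra.single (embG G H s) (μ.coeff s) = μ.coeff s • deltaG G H s := by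
      rw [deltaG, MonoidAlgebra.smul_single, smul_eq_mul, mul_one]
    rw [e1, e2]
    calc (f.coeff g • deltaG G H g) * (nu G H * (μ.coeff s • deltaG G H s) * nu G H)
        = (f.coeff g * μ.coeff s) • (deltaG G H g * (nu G H * deltaG G H s * nu G H)) := by
          simp only [Algebra.mul_smul_comm, Algebra.smul_mul_assoc, smul_smul]
          rw [mul_comm (μ.coeff s) (f.coeff g)]
      _ = (f.coeff g * μ.coeff s) • (nuAt G H g * nuAt G H (g * s) * deltaG G H (g * s)) := by
          congr 1
          rw [show deltaG G H g * (nu G H * deltaG G H s * nu G H)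
              = deltaG G H g * nu G H * deltaG G H s * nu G H by
            simp only [mul_assoc], deltaG_mul_nu, mul_assoc (nuAt G H g), deltaG_mul,
            mul_assoc (nuAt G H g), deltaG_mul_nu, ← mul_assoc]
  have hkey : P * Q * (show MonoidAlgebra ℝ (Wreath G H) from MonoidAlgebra.ofCoeff (Finsupp.mapDomain (embG G H) f.coeff)) *
      (nu G H * (show MonoidAlgebra ℝ (Wreath G H) from MonoidAlgebra.ofCoeff (Finsupp.mapDomain (embG G H) μ.coeff)) * nu G H)
      = lam • (P * Q * (show MonoidAlgebra ℝ (Wreath G H) from MonoidAlgebra.ofCoeff (Finsupp.mapDomain (embG G H) f.coeff))) := by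
    rw [mul_assoc (P * Q)]
    have hmid : (show MonoidAlgebra ℝ (Wreath G H) from MonoidAlgebra.ofCoeff (Finsupp.mapDomain (embG G H) f.coeff)) *
        (nu G H * (show MonoidAlgebra ℝ (Wreath G H) from MonoidAlgebra.ofCoeff (Finsupp.mapDomain (embG G H) μ.coeff)) * nu G H)
        = ∑ g ∈ f.coeff.support, ∑ s ∈ μ.coeff.support,
            (f.coeff g * μ.coeff s) • (nuAt G H g * nuAt G H (g * s) * deltaG G H (g * s)) := by
      rw [hfexp, hμexp, Finset.sum_mul]
      refine Finset.sum_congr rfl fun g _ => ?_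
      rw [Finset.mul_sum, Finset.sum_mul, Finset.mul_sum]
      exact Finset.sum_congr rfl fun s _ => hterm g s
    rw [hmid, Finset.mul_sum]
    have hinner : ∀ g ∈ f.coeff.support,
        (P * Q) * (∑ s ∈ μ.coeff.support,
          (f.coeff g * μ.coeff s) • (nuAt G H g * nuAt G H (g * s) * deltaG G H (g * s)))
        = ∑ s ∈ μ.coeff.support, (if g * s ∈ A then
            (f.coeff g * μ.coeff s) • (P * Q * deltaG G H (g * s)) else 0) := by
      intro g hg
      rw [Finset.mul_sum]
      refine Finset.sum_congr rfl fun s hs => ?_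
      rw [mul_smul_comm]
      by_cases hgs : g * s ∈ A
      · rw [if_pos hgs]
        congr 1
        rw [← mul_assoc, ← mul_assoc, hRnu g (hfsub hg), hRnu (g * s) hgs]
      · rw [if_neg hgs]
        rw [← mul_assoc, ← mul_assoc, hRnu g (hfsub hg),
          hRnu0 (g * s) (hbd g (hfsub hg) s hs hgs), zero_mul, smul_zero]
    rw [Finset.sum_congr rfl hinner]
    have hpull : ∑ g ∈ f.coeff.support, ∑ s ∈ μ.coeff.support,
        (if g * s ∈ A then (f.coeff g * μ.coeff s) • (P * Q * deltaG G H (g * s)) else 0)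
        = (P * Q) * ∑ g ∈ f.coeff.support, ∑ s ∈ μ.coeff.support,
            (if g * s ∈ A then
              (f.coeff g * μ.coeff s) • MonoidAlgebra.single (embG G H (g * s)) (1 : ℝ)
            else 0) := by
      rw [Finset.mul_sum]
      refine Finset.sum_congr rfl fun g _ => ?_
      rw [Finset.mul_sum]
      refine Finset.sum_congr rfl fun s _ => ?_
      split
      · rw [mul_smul_comm]
        rfl
      · rw [mul_zero]
    rw [hpull]
    have hG : ∑ g ∈ f.coeff.support, ∑ s ∈ μ.coeff.support,
        (if g * s ∈ A then (f.coeff g * μ.coeff s) • MonoidAlgebra.single (g * s) (1 : ℝ)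
          else 0) = lam • f := by
      rw [convolution_identity G μ f hμsym A hfsub, heig]
    have hW : (∑ g ∈ f.coeff.support, ∑ s ∈ μ.coeff.support,
        (if g * s ∈ A then
          (f.coeff g * μ.coeff s) • MonoidAlgebra.single (embG G H (g * s)) (1 : ℝ)
        else 0) : MonoidAlgebra ℝ (Wreath G H))
        = MonoidAlgebra.mapDomain (embG G H) (lam • f) := by
      rw [← hG, mapDomain_fsum']
      refine Finset.sum_congr rfl fun g _ => ?_
      rw [mapDomain_fsum']
      refine Finset.sum_congr rfl fun s _ => ?_
      split
      · rw [mapDomain_smul', MonoidAlgebra.mapDomain_single]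
      · rw [MonoidAlgebra.mapDomain_zero]
    rw [hW, mapDomain_smul', mul_smul_comm, mul_assoc]
    rw [mul_assoc]; rfl
  exact ⟨hkey, fun hne => ⟨P * Q * (show MonoidAlgebra ℝ (Wreath G H) from MonoidAlgebra.ofCoeff (Finsupp.mapDomain (embG G H) f.coeff)), hne, hkey⟩⟩
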